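/- Let 𝔽 be a field with char 𝔽 ≠ 2 and let 𝔮 = (q_{ij}) be a multiplicatively antisymmetric n×n matrix over 𝔽 with q_{ij} ≠ 1 for all 1 ≤ i < j ≤ n. Suppose A = (α_{ij}) is an invertible n×n matrix over 𝔽 satisfying α_{ik}α_{jl}(1 − q_{ij}q_{lk}) = α_{il}α_{jk}(q_{ij} − q_{lk}) for all i < j and all k ≤ l. Then every row of A and every column of A has exactly one nonzero entry (i.e. A is a generalized permutation matrix). -/

import Mathlib

/-- A multiplicatively antisymmetric matrix: nonzero entries, `q i i = 1`, `q j i = (q i j)⁻¹`. -/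
def MultAntisym (F : Type*) [Field F] {n : ℕ} (q : Fin n → Fin n → F) : Prop :=
  (∀ i j, q i j ≠ 0) ∧ (∀ i, q i i = 1) ∧ (∀ i j, q j i = (q i j)⁻¹)

theorem generalized_perm_matrix_of_alev_chamarie_relations (F : Type*) [Field F]
    (hchar : ringChar F ≠ 2) (n : ℕ) (q : Fin n → Fin n → F) (hq : MultAntisym F q)
    (hq1 : ∀ i j : Fin n, i < j → q i j ≠ 1)
    (A : Matrix (Fin n) (Fin n) F) (hA : IsUnit A)
    (hrel : ∀ i j k l : Fin n, i < j → k ≤ l →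
      A i k * A j l * (1 - q i j * q l k) = A i l * A j k * (q i j - q l k)) :
    (∀ i : Fin n, ∃! j : Fin n, A i j ≠ 0) ∧ (∀ j : Fin n, ∃! i : Fin n, A i j ≠ 0) := by
  classical
  obtain ⟨B, hBA, hAB⟩ : ∃ B : Matrix (Fin n) (Fin n) F, B * A = 1 ∧ A * B = 1 := by
    obtain ⟨u, hu⟩ := hA
    exact ⟨↑u⁻¹, by rw [← hu]; exact u.inv_mul, by rw [← hu]; exact u.mul_inv⟩
  have h2 : (2 : F) ≠ 0 := Ring.two_ne_zero hchar
  -- kernel is trivial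
  have hker : ∀ v : Fin n → F, A.mulVec v = 0 → v = 0 := by
    intro v hv
    have h := congrArg B.mulVec hv
    rwa [Matrix.mulVec_mulVec, hBA, Matrix.one_mulVec, Matrix.mulVec_zero] at h
  have hker' : ∀ v : Fin n → F, Matrix.vecMul v A = 0 → v = 0 := by
    intro v hv
    have h := congrArg (fun w => Matrix.vecMul w B) hv
    simp only [Matrix.vecMul_vecMul, hAB, Matrix.vecMul_one, Matrix.zero_vecMul] at h
    exact h
  -- each column has at most one nonzero entry
  have hcol0 : ∀ i j k : Fin n, i ≠ j → A i k * A j k = 0 := by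
    have key : ∀ i j k : Fin n, i < j → A i k * A j k = 0 := by
      intro i j k hij
      have h := hrel i j k k hij le_rfl
      rw [hq.2.1 k] at h
      have hqne : q i j - 1 ≠ 0 := sub_ne_zero.mpr (hq1 i j hij)
      have h2' : (2 : F) * ((A i k * A j k) * (q i j - 1)) = 0 := by linear_combination -h
      have := (mul_eq_zero.mp h2').resolve_left h2
      exact (mul_eq_zero.mp this).resolve_right hqne
    intro i j k hij
    rcases hij.lt_or_gt with h | h
    · exact key i j k h
    · rw [mul_comm]; exact key j i k h
  -- every column has a nonzero entry
  have hcolex : ∀ k : Fin n, ∃ i, A i k ≠ 0 := by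
    intro k
    by_contra h
    push_neg at h
    have hz : (Pi.single k 1 : Fin n → F) = 0 := by
      apply hker
      ext i
      simp [Matrix.mulVec_single, h i]
    have := congrFun hz k
    simp at this
  -- every row has a nonzero entry
  have hrowex : ∀ i : Fin n, ∃ k, A i k ≠ 0 := by
    intro i
    by_contra h
    push_neg at h
    have hz : (Pi.single i 1 : Fin n → F) = 0 := by
      apply hker'
      ext k
      simp [Matrix.single_vecMul, h k]
    have := congrFun hz i
    simp at this
  -- each row has at most one nonzero entry
  have hrow0 : ∀ i k l : Fin n, k ≠ l → A i k ≠ 0 → A i l ≠ 0 → False := by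
    intro i k l hkl hik hil
    set v : Fin n → F := A i l • (Pi.single k 1 : Fin n → F) - A i k • (Pi.single l 1 : Fin n → F) with hv
    have hzero : A.mulVec v = 0 := by
      ext j
      have hms : A.mulVec v = A i l • A.mulVec (Pi.single k 1) - A i k • A.mulVec (Pi.single l 1) := by
        rw [hv, Matrix.mulVec_sub, Matrix.mulVec_smul, Matrix.mulVec_smul]
      rw [hms]
      simp only [Pi.sub_apply, Pi.smul_apply, Matrix.mulVec_single, smul_eq_mul, Pi.zero_apply,
        mul_one, MulOpposite.op_one, one_smul, Matrix.col_apply]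
      by_cases hji : j = i
      · subst hji; ring
      · have h1 : A i k * A j k = 0 := hcol0 i j k (Ne.symm hji)
        have h2 : A i l * A j l = 0 := hcol0 i j l (Ne.symm hji)
        have hjk : A j k = 0 := by
          rcases mul_eq_zero.mp h1 with h | h
          · exact absurd h hik
          · exact h
        have hjl : A j l = 0 := by
          rcases mul_eq_zero.mp h2 with h | h
          · exact absurd h hil
          · exact h
        rw [hjk, hjl]; ring
    have hv0 := hker v hzero
    have := congrFun hv0 k
    rw [hv] at this
    simp [Pi.single_apply, hkl, Ne.symm hkl] at this
    exact hil this
  constructor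
  · intro i
    obtain ⟨k, hk⟩ := hrowex i
    refine ⟨k, hk, fun l hl => ?_⟩
    by_contra hne
    exact hrow0 i l k hne hl hk
  · intro k
    obtain ⟨i, hi⟩ := hcolex k
    refine ⟨i, hi, fun j hj => ?_⟩
    by_contra hne
    have := hcol0 j i k hne
    rcases mul_eq_zero.mp this with h | h
    · exact hj h
    · exact hi h
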